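/- For the (2,1) extended Davis–Skodje system ẋ₁ = -x₁, ẋ₂ = -2x₂, ẏ = -γy + ((γ-1)x₁+γx₁²)/(1+x₁)² + (2(γ-2)x₂+2γx₂²)/(1+x₂)², the graph y = h(x₁,x₂) := (x₁ + 2x₂ + 3x₁x₂)/((1+x₁)(1+x₂)) is invariant: ∂₁h·(-x₁) + ∂₂h·(-2x₂) equals the right-hand side of the ẏ equation evaluated at y = h(x₁,x₂), for all x₁, x₂ > -1 distinct from -1. -/

import Mathlib

lemma ds_deriv (b : ℝ) (hb : b ≠ -1) (a : ℝ) (ha : a ≠ -1) :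
    deriv (fun s => (s + 2 * b + 3 * s * b) / ((1 + s) * (1 + b))) a =
      ((1 + 3 * b) * ((1 + a) * (1 + b)) - (a + 2 * b + 3 * a * b) * (1 + b)) /
        ((1 + a) * (1 + b)) ^ 2 := by
  have ha' : (1 + a) * (1 + b) ≠ 0 :=
    mul_ne_zero (fun h => ha (by linarith)) (fun h => hb (by linarith))
  have h1 : HasDerivAt (fun s : ℝ => s + 2 * b + 3 * s * b) (1 + 3 * b) a := by
    have := ((hasDerivAt_id a).add_const (2 * b)).add
      (((hasDerivAt_id a).const_mul (3 : ℝ)).mul_const b)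
    exact (this.congr_deriv (by ring)).congr_of_eventuallyEq
      (Filter.Eventually.of_forall fun s => by simp only [Pi.add_apply, id])
  have h2 : HasDerivAt (fun s : ℝ => (1 + s) * (1 + b)) (1 + b) a := by
    have := ((hasDerivAt_id a).const_add (1 : ℝ)).mul_const (1 + b)
    simpa using this
  exact (h1.div h2 ha').deriv

lemma ds_deriv2 (a : ℝ) (ha : a ≠ -1) (b : ℝ) (hb : b ≠ -1) :
    deriv (fun s => (a + 2 * s + 3 * a * s) / ((1 + a) * (1 + s))) b =
      ((2 + 3 * a) * ((1 + a) * (1 + b)) - (a + 2 * b + 3 * a * b) * (1 + a)) /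
        ((1 + a) * (1 + b)) ^ 2 := by
  have hb' : (1 + a) * (1 + b) ≠ 0 :=
    mul_ne_zero (fun h => ha (by linarith)) (fun h => hb (by linarith))
  have h1 : HasDerivAt (fun s : ℝ => a + 2 * s + 3 * a * s) (2 + 3 * a) b := by
    have := (((hasDerivAt_id b).const_mul (2 : ℝ)).const_add a).add
      ((hasDerivAt_id b).const_mul (3 * a))
    exact (this.congr_deriv (by ring)).congr_of_eventuallyEq
      (Filter.Eventually.of_forall fun s => by simp only [Pi.add_apply, id])
  have h2 : HasDerivAt (fun s : ℝ => (1 + a) * (1 + s)) (1 + a) b := by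
    have := (((hasDerivAt_id b).const_add (1 : ℝ)).const_mul (1 + a))
    simpa using this
  exact (h1.div h2 hb').deriv

theorem extended_davis_skodje_invariant (γ : ℝ) (hγ : 2 < γ)
    (h : ℝ → ℝ → ℝ)
    (hh : ∀ x₁ x₂ : ℝ, x₁ ≠ -1 → x₂ ≠ -1 →
      h x₁ x₂ = (x₁ + 2 * x₂ + 3 * x₁ * x₂) / ((1 + x₁) * (1 + x₂))) :
    ∀ x₁ x₂ : ℝ, x₁ ≠ -1 → x₂ ≠ -1 →
      deriv (fun s => h s x₂) x₁ * (-x₁) + deriv (fun s => h x₁ s) x₂ * (-(2 * x₂)) =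
        -γ * h x₁ x₂ + ((γ - 1) * x₁ + γ * x₁ ^ 2) / (1 + x₁) ^ 2
          + (2 * (γ - 2) * x₂ + 2 * γ * x₂ ^ 2) / (1 + x₂) ^ 2 := by
  intro x₁ x₂ h1 h2
  have e1 : (fun s => h s x₂) =ᶠ[nhds x₁]
      (fun s => (s + 2 * x₂ + 3 * s * x₂) / ((1 + s) * (1 + x₂))) := by
    filter_upwards [isOpen_compl_singleton.mem_nhds (by simpa using h1 : x₁ ∈ ({-1}ᶜ : Set ℝ))]
      with s hs
    exact hh s x₂ hs h2
  have e2 : (fun s => h x₁ s) =ᶠ[nhds x₂]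
      (fun s => (x₁ + 2 * s + 3 * x₁ * s) / ((1 + x₁) * (1 + s))) := by
    filter_upwards [isOpen_compl_singleton.mem_nhds (by simpa using h2 : x₂ ∈ ({-1}ᶜ : Set ℝ))]
      with s hs
    exact hh x₁ s h1 hs
  rw [e1.deriv_eq, e2.deriv_eq, ds_deriv x₂ h2 x₁ h1, ds_deriv2 x₁ h1 x₂ h2,
    hh x₁ x₂ h1 h2]
  have ha : (1 : ℝ) + x₁ ≠ 0 := fun h => h1 (by linarith)
  have hb : (1 : ℝ) + x₂ ≠ 0 := fun h => h2 (by linarith)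
  field_simp
  ring
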